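/- Let Y be a topological space and let I : ℕ → Ideal C(Y, ℝ) be a monotone increasing sequence of ideals of the ring of continuous real-valued functions on Y. Then there exists an open dense subset U ⊆ Y such that every x ∈ U has an open neighborhood V with the following property: for every j, the restricted ideal I_j | V (the ideal of C(V, ℝ) generated by the restrictions to V of the elements of I_j) is trivial, i.e. equal either to the zero ideal or to all of C(V, ℝ); consequently the sequence of restricted ideals (I_j | V)_j is stationary on V. -/

import Mathlib

/-- The restriction ring homomorphism `C(Y, ℝ) →+* C(V, ℝ)` for a subset `V ⊆ Y`. -/
def restrictHom {Y : Type*} [TopologicalSpace Y] (V : Set Y) :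
    C(Y, ℝ) →+* C(V, ℝ) where
  toFun f := f.restrict V
  map_one' := rfl
  map_mul' _ _ := rfl
  map_zero' := rfl
  map_add' _ _ := rfl

theorem aux_bot {Y : Type*} [TopologicalSpace Y] (J : Ideal C(Y, ℝ)) (V : Set Y)
    (h : ∀ f ∈ J, ∀ x ∈ V, f x = 0) : Ideal.map (restrictHom V) J = ⊥ := by
  rw [Ideal.map_eq_bot_iff_le_ker]
  intro f hf
  simp only [RingHom.mem_ker]
  ext ⟨x, hx⟩
  exact h f hf x hx

theorem aux_top {Y : Type*} [TopologicalSpace Y] (J : Ideal C(Y, ℝ)) (V : Set Y)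
    (f : C(Y, ℝ)) (hf : f ∈ J) (h : ∀ x ∈ V, f x ≠ 0) :
    Ideal.map (restrictHom V) J = ⊤ := by
  have hmem : restrictHom V f ∈ Ideal.map (restrictHom V) J :=
    Ideal.mem_map_of_mem _ hf
  have hunit : IsUnit (restrictHom V f) := by
    refine IsUnit.of_mul_eq_one ⟨fun x => (f x)⁻¹, ?_⟩ ?_
    · exact (f.continuous.comp continuous_subtype_val).inv₀ fun x => h x x.2
    · ext x
      exact mul_inv_cancel₀ (h x x.2)
  exact Ideal.eq_top_of_isUnit_mem _ hmem hunit

theorem aux_stat {R : Type*} [CommRing R] (M : ℕ → Ideal R) (hM : Monotone M)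
    (htriv : ∀ j, M j = ⊥ ∨ M j = ⊤) :
    ∃ j₀ : ℕ, ∀ j : ℕ, j₀ ≤ j → M j = M j₀ := by
  by_cases h : ∃ j, M j = ⊤
  · obtain ⟨j₀, hj₀⟩ := h
    exact ⟨j₀, fun j hj => by
      have := hM hj
      rw [hj₀] at this ⊢
      exact top_le_iff.mp this⟩
  · push_neg at h
    refine ⟨0, fun j _ => ?_⟩
    rcases htriv j with h1 | h1
    · rcases htriv 0 with h2 | h2
      · rw [h1, h2]
      · exact absurd h2 (h 0)
    · exact absurd h1 (h j)

/-- for a monotone increasing sequence `I : ℕ → Ideal C(Y, ℝ)` of ideals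
of the ring of continuous functions on a topological space `Y`, there is an open dense
set `U ⊆ Y` such that each `x ∈ U` has an open neighborhood `V` on which every
restricted ideal `I j | V` is trivial (zero or everything); consequently the sequence
of restricted ideals is stationary on `V`. -/
theorem stmt8 {Y : Type*} [TopologicalSpace Y] (I : ℕ → Ideal C(Y, ℝ))
    (hI : Monotone I) :
    ∃ U : Set Y, IsOpen U ∧ Dense U ∧ ∀ x ∈ U, ∃ V : Set Y, IsOpen V ∧ x ∈ V ∧
      (∀ j : ℕ, Ideal.map (restrictHom V) (I j) = ⊥ ∨
        Ideal.map (restrictHom V) (I j) = ⊤) ∧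
      ∃ j₀ : ℕ, ∀ j : ℕ, j₀ ≤ j →
        Ideal.map (restrictHom V) (I j) = Ideal.map (restrictHom V) (I j₀) := by
  classical
  set Z : ℕ → Set Y := fun j => {x | ∀ f ∈ I j, (f : C(Y, ℝ)) x = 0} with hZdef
  have hZanti : ∀ {j k : ℕ}, j ≤ k → Z k ⊆ Z j :=
    fun {j k} hjk x hx f hf => hx f (hI hjk hf)
  have hZcopen : ∀ j, IsOpen (Z j)ᶜ := by
    intro j
    have : (Z j)ᶜ = ⋃ f ∈ (I j : Set C(Y, ℝ)), (f : C(Y, ℝ)) ⁻¹' {(0 : ℝ)}ᶜ := by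
      ext x
      simp [hZdef, not_forall]
    rw [this]
    exact isOpen_biUnion fun f _ => isOpen_compl_singleton.preimage f.continuous
  -- the pieces
  set A : ℕ → Set Y := fun k =>
    Nat.rec ((Z 0)ᶜ) (fun k _ => interior (Z k) ∩ (Z (k + 1))ᶜ) k with hAdef
  have hA0 : A 0 = (Z 0)ᶜ := rfl
  have hAs : ∀ k, A (k + 1) = interior (Z k) ∩ (Z (k + 1))ᶜ := fun k => rfl
  have hAopen : ∀ k, IsOpen (A k) := by
    intro k
    cases k with
    | zero => exact hZcopen 0
    | succ k => exact isOpen_interior.inter (hZcopen (k + 1))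
  refine ⟨interior (⋂ j, Z j) ∪ ⋃ k, A k, ?_, ?_, ?_⟩
  · exact isOpen_interior.union (isOpen_iUnion hAopen)
  · -- density
    rw [dense_iff_inter_open]
    intro W hWopen hWne
    by_cases hall : ∀ j, W ⊆ Z j
    · have hsub : W ⊆ interior (⋂ j, Z j) :=
        hWopen.subset_interior_iff.mpr (Set.subset_iInter hall)
      obtain ⟨x, hx⟩ := hWne
      exact ⟨x, hx, Or.inl (hsub hx)⟩
    · push_neg at hall
      have hex : ∃ k, ¬ W ⊆ Z k := by
        obtain ⟨k, hk⟩ := hall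
        exact ⟨k, fun h => hk h⟩
      by_cases hk0 : Nat.find hex = 0
      · have hk : ¬ W ⊆ Z 0 := hk0 ▸ Nat.find_spec hex
        obtain ⟨x, hxW, hxZ⟩ := Set.not_subset.mp hk
        exact ⟨x, hxW, Or.inr (Set.mem_iUnion.mpr ⟨0, by rw [hA0]; exact hxZ⟩)⟩
      · obtain ⟨k, hfind⟩ : ∃ k, Nat.find hex = k + 1 :=
          ⟨Nat.find hex - 1, by omega⟩
        have hk : ¬ W ⊆ Z (k + 1) := hfind ▸ Nat.find_spec hex
        obtain ⟨x, hxW, hxZ⟩ := Set.not_subset.mp hk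
        have hprev : W ⊆ Z k := by
          by_contra hc
          exact Nat.find_min hex (by omega) hc
        have hxint : x ∈ interior (Z k) :=
          (hWopen.subset_interior_iff.mpr hprev) hxW
        exact ⟨x, hxW, Or.inr (Set.mem_iUnion.mpr ⟨k + 1,
          by rw [hAs]; exact ⟨hxint, hxZ⟩⟩)⟩
  · -- local triviality
    intro x hx
    have key : ∀ V : Set Y, IsOpen V → x ∈ V →
        (∀ j : ℕ, Ideal.map (restrictHom V) (I j) = ⊥ ∨
          Ideal.map (restrictHom V) (I j) = ⊤) →
        ∃ V : Set Y, IsOpen V ∧ x ∈ V ∧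
          (∀ j : ℕ, Ideal.map (restrictHom V) (I j) = ⊥ ∨
            Ideal.map (restrictHom V) (I j) = ⊤) ∧
          ∃ j₀ : ℕ, ∀ j : ℕ, j₀ ≤ j →
            Ideal.map (restrictHom V) (I j) = Ideal.map (restrictHom V) (I j₀) := by
      intro V hVopen hxV htriv
      exact ⟨V, hVopen, hxV, htriv,
        aux_stat _ (fun a b hab => Ideal.map_mono (hI hab)) htriv⟩
    rcases hx with hx | hx
    · -- x in interior of intersection
      refine key _ isOpen_interior hx fun j => Or.inl (aux_bot _ _ ?_)
      intro f hf y hy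
      have : y ∈ Z j := (Set.iInter_subset Z j) (interior_subset hy)
      exact this f hf
    · obtain ⟨k, hk⟩ := Set.mem_iUnion.mp hx
      cases k with
      | zero =>
        rw [hA0] at hk
        have : ∃ f ∈ I 0, (f : C(Y, ℝ)) x ≠ 0 := by
          by_contra hc
          push_neg at hc
          exact hk hc
        obtain ⟨f, hfI, hfx⟩ := this
        refine key ((f : C(Y, ℝ)) ⁻¹' {(0 : ℝ)}ᶜ)
          (isOpen_compl_singleton.preimage f.continuous) hfx
          fun j => Or.inr (aux_top _ _ f (hI (Nat.zero_le j) hfI) fun y hy => hy)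
      | succ k =>
        rw [hAs] at hk
        obtain ⟨hkint, hkc⟩ := hk
        have : ∃ f ∈ I (k + 1), (f : C(Y, ℝ)) x ≠ 0 := by
          by_contra hc
          push_neg at hc
          exact hkc hc
        obtain ⟨f, hfI, hfx⟩ := this
        refine key ((f : C(Y, ℝ)) ⁻¹' {(0 : ℝ)}ᶜ ∩ interior (Z k))
          ((isOpen_compl_singleton.preimage f.continuous).inter isOpen_interior)
          ⟨hfx, hkint⟩ ?_
        intro j
        rcases le_or_gt (k + 1) j with hj | hj
        · exact Or.inr (aux_top _ _ f (hI hj hfI) fun y hy => hy.1)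
        · refine Or.inl (aux_bot _ _ fun g hg y hy => ?_)
          have hyZ : y ∈ Z k := interior_subset hy.2
          exact hZanti (by omega) hyZ g hg
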